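/- Let f : I → ℝ be continuous at ω₀ and q,ω-differentiable on I. Then for all a, b ∈ I, the function D_{q,ω}f is q,ω-integrable on [a,b] and ∫_{a}^{b} D_{q,ω}f(t) d_{q,ω}t = f(b) − f(a). -/

import Mathlib

open Filter Topology

noncomputable section

/-- The fixed point `ω₀ := ω/(1-q)` of `t ↦ qt + ω`. -/
def hahnOmega0 (q ω : ℝ) : ℝ := ω / (1 - q)

/-- The Hahn difference operator `D_{q,ω}`:
`D_{q,ω}f(t) = (f(qt+ω) - f t)/((qt+ω) - t)` for `t ≠ ω₀`, and the ordinary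
derivative at `t = ω₀`. -/
def hahnDeriv (q ω : ℝ) (f : ℝ → ℝ) (t : ℝ) : ℝ :=
  if t = hahnOmega0 q ω then deriv f t
  else (f (q * t + ω) - f t) / ((q * t + ω) - t)

/-- `f` is `q,ω`-differentiable at `t` (automatic off `ω₀`; at `ω₀` it means
ordinary (Fréchet) differentiability). -/
def HahnDiffAt (q ω : ℝ) (f : ℝ → ℝ) (t : ℝ) : Prop :=
  t = hahnOmega0 q ω → DifferentiableAt ℝ f t

/-- The point `x q^k + [k]_{q,ω}` where `[k]_{q,ω} = ω(1-q^k)/(1-q)`. -/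
def jnPoint (q ω x : ℝ) (k : ℕ) : ℝ := x * q ^ k + ω * (1 - q ^ k) / (1 - q)

/-- Partial sums of the Jackson–Nörlund series at `x`. -/
def jnPartial (q ω : ℝ) (f : ℝ → ℝ) (x : ℝ) (n : ℕ) : ℝ :=
  ∑ k ∈ Finset.range n, q ^ k * f (jnPoint q ω x k)

/-- Convergence of the Jackson–Nörlund series `Σ q^k f(x q^k + [k]_{q,ω})`. -/
def JNConvergesAt (q ω : ℝ) (f : ℝ → ℝ) (x : ℝ) : Prop :=
  ∃ S : ℝ, Tendsto (jnPartial q ω f x) atTop (𝓝 S)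

/-- The Jackson–Nörlund integral `∫_{ω₀}^{x} f(t) d_{q,ω}t`. -/
def jnSum (q ω : ℝ) (f : ℝ → ℝ) (x : ℝ) : ℝ :=
  (x * (1 - q) - ω) * limUnder atTop (jnPartial q ω f x)

/-- The Jackson–Nörlund integral `∫_{a}^{b} f(t) d_{q,ω}t`. -/
def jnIntegral (q ω : ℝ) (f : ℝ → ℝ) (a b : ℝ) : ℝ :=
  jnSum q ω f b - jnSum q ω f a

/-- The orbit `{q^n s + [n]_{q,ω} : n ∈ ℕ}`. -/
def qwOrbit (q ω s : ℝ) : Set ℝ := Set.range (jnPoint q ω s)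

/-- The orbit together with `ω₀`, i.e. `[s]_{q,ω}`. -/
def qwClosedOrbit (q ω s : ℝ) : Set ℝ := qwOrbit q ω s ∪ {hahnOmega0 q ω}

/-- The `q,ω`-interval `[a,b]_{q,ω}`. -/
def qwInterval (q ω a b : ℝ) : Set ℝ :=
  qwOrbit q ω a ∪ qwOrbit q ω b ∪ {hahnOmega0 q ω}

lemma jnPoint_sub (q ω x : ℝ) (hq1 : q ≠ 1) (k : ℕ) :
    jnPoint q ω x k - hahnOmega0 q ω = q ^ k * (x - hahnOmega0 q ω) := by
  have h : (1 : ℝ) - q ≠ 0 := sub_ne_zero.mpr (Ne.symm hq1)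
  unfold jnPoint hahnOmega0
  field_simp
  ring

lemma jnPoint_succ (q ω x : ℝ) (hq1 : q ≠ 1) (k : ℕ) :
    jnPoint q ω x (k + 1) = q * jnPoint q ω x k + ω := by
  have h : (1 : ℝ) - q ≠ 0 := sub_ne_zero.mpr (Ne.symm hq1)
  unfold jnPoint
  field_simp
  ring

lemma jnPartial_telescope (q ω : ℝ) (hq0 : 0 < q) (hq1 : q < 1)
    (f : ℝ → ℝ) (x : ℝ) (hx : x ≠ hahnOmega0 q ω) (n : ℕ) :
    jnPartial q ω (hahnDeriv q ω f) x n
      = (f x - f (jnPoint q ω x n)) / (x * (1 - q) - ω) := by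
  have hq1' : q ≠ 1 := ne_of_lt hq1
  have h1q : (1 : ℝ) - q ≠ 0 := sub_ne_zero.mpr (Ne.symm hq1')
  have hC : x * (1 - q) - ω ≠ 0 := by
    have : x * (1 - q) - ω = (x - hahnOmega0 q ω) * (1 - q) := by
      unfold hahnOmega0; field_simp
    rw [this]
    exact mul_ne_zero (sub_ne_zero.mpr hx) h1q
  induction n with
  | zero =>
      simp [jnPartial, jnPoint]
  | succ n ih =>
      have hp : jnPoint q ω x n ≠ hahnOmega0 q ω := by
        intro h
        have := jnPoint_sub q ω x hq1' n
        rw [h, sub_self] at this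
        have hqk : q ^ n ≠ 0 := pow_ne_zero n (ne_of_gt hq0)
        exact hx (sub_eq_zero.mp ((mul_eq_zero.mp this.symm).resolve_left hqk))
      have hstep : q ^ n * hahnDeriv q ω f (jnPoint q ω x n)
          = (f (jnPoint q ω x n) - f (jnPoint q ω x (n + 1))) / (x * (1 - q) - ω) := by
        rw [hahnDeriv, if_neg hp]
        have hnum : q * jnPoint q ω x n + ω = jnPoint q ω x (n + 1) :=
          (jnPoint_succ q ω x hq1' n).symm
        have hden : (q * jnPoint q ω x n + ω) - jnPoint q ω x n
            = -(q ^ n) * (x * (1 - q) - ω) := by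
          have h2 := jnPoint_sub q ω x hq1' n
          unfold jnPoint hahnOmega0 at *
          field_simp
          ring
        rw [hden, hnum]
        have hqn : (q : ℝ) ^ n ≠ 0 := pow_ne_zero n (ne_of_gt hq0)
        field_simp
        ring
      have : jnPartial q ω (hahnDeriv q ω f) x (n + 1)
          = jnPartial q ω (hahnDeriv q ω f) x n
            + q ^ n * hahnDeriv q ω f (jnPoint q ω x n) := by
        simp [jnPartial, Finset.sum_range_succ]
      rw [this, ih, hstep]
      field_simp
      ring

lemma jnPoint_tendsto (q ω x : ℝ) (hq0 : 0 ≤ q) (hq1 : q < 1) :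
    Tendsto (jnPoint q ω x) atTop (𝓝 (hahnOmega0 q ω)) := by
  have hq1' : q ≠ 1 := ne_of_lt hq1
  have h : ∀ k, jnPoint q ω x k = hahnOmega0 q ω + q ^ k * (x - hahnOmega0 q ω) := by
    intro k
    have := jnPoint_sub q ω x hq1' k
    linarith
  simp only [funext h]
  have := (tendsto_pow_atTop_nhds_zero_of_lt_one hq0 hq1).mul_const (x - hahnOmega0 q ω)
  have := (this.const_add (hahnOmega0 q ω))
  simpa using this

lemma jn_key (q ω : ℝ) (hq0 : 0 < q) (hq1 : q < 1)
    (f : ℝ → ℝ) (hf : ContinuousAt f (hahnOmega0 q ω)) (x : ℝ) :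
    JNConvergesAt q ω (hahnDeriv q ω f) x ∧
      jnSum q ω (hahnDeriv q ω f) x = f x - f (hahnOmega0 q ω) := by
  have hq1' : q ≠ 1 := ne_of_lt hq1
  by_cases hx : x = hahnOmega0 q ω
  · subst hx
    have hp : ∀ k, jnPoint q ω (hahnOmega0 q ω) k = hahnOmega0 q ω := by
      intro k
      have := jnPoint_sub q ω (hahnOmega0 q ω) hq1' k
      simp at this
      linarith
    have hpart : ∀ n, jnPartial q ω (hahnDeriv q ω f) (hahnOmega0 q ω) n
        = ∑ k ∈ Finset.range n, q ^ k * deriv f (hahnOmega0 q ω) := by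
      intro n
      unfold jnPartial
      refine Finset.sum_congr rfl fun k _ => ?_
      rw [hp k, hahnDeriv, if_pos rfl]
    have hgeo : HasSum (fun k : ℕ => q ^ k * deriv f (hahnOmega0 q ω))
        ((1 - q)⁻¹ * deriv f (hahnOmega0 q ω)) :=
      (hasSum_geometric_of_lt_one (le_of_lt hq0) hq1).mul_right _
    have htend := hgeo.tendsto_sum_nat
    constructor
    · exact ⟨_, by simpa only [funext hpart] using htend⟩
    · have hC : hahnOmega0 q ω * (1 - q) - ω = 0 := by
        have h1q : (1 : ℝ) - q ≠ 0 := sub_ne_zero.mpr (Ne.symm hq1')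
        unfold hahnOmega0
        rw [div_mul_eq_mul_div, mul_div_assoc, div_self h1q, mul_one, sub_self]
      unfold jnSum
      rw [hC, zero_mul, sub_self]
  · have hC : x * (1 - q) - ω ≠ 0 := by
      have h1q : (1 : ℝ) - q ≠ 0 := sub_ne_zero.mpr (Ne.symm hq1')
      have : x * (1 - q) - ω = (x - hahnOmega0 q ω) * (1 - q) := by
        unfold hahnOmega0; field_simp
      rw [this]
      exact mul_ne_zero (sub_ne_zero.mpr hx) h1q
    have htend : Tendsto (jnPartial q ω (hahnDeriv q ω f) x) atTop
        (𝓝 ((f x - f (hahnOmega0 q ω)) / (x * (1 - q) - ω))) := by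
      have h1 : Tendsto (fun n => f (jnPoint q ω x n)) atTop (𝓝 (f (hahnOmega0 q ω))) :=
        hf.tendsto.comp (jnPoint_tendsto q ω x (le_of_lt hq0) hq1)
      have h2 := ((tendsto_const_nhds (x := f x)).sub h1).div_const (x * (1 - q) - ω)
      have heq : ∀ n, jnPartial q ω (hahnDeriv q ω f) x n
          = (f x - f (jnPoint q ω x n)) / (x * (1 - q) - ω) :=
        jnPartial_telescope q ω hq0 hq1 f x hx
      simpa only [funext heq] using h2
    refine ⟨⟨_, htend⟩, ?_⟩
    unfold jnSum
    rw [htend.limUnder_eq]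
    field_simp

/-- `∫_a^b D_{q,ω}f(t) d_{q,ω}t = f(b) - f(a)` for `f` continuous
at `ω₀` and `q,ω`-differentiable on `I`. -/
theorem jn_integral_hahn_deriv (q ω : ℝ) (hq0 : 0 < q) (hq1 : q < 1)
    (hω : 0 < ω) (I : Set ℝ) (hI : I.OrdConnected) (hmem : hahnOmega0 q ω ∈ I)
    (f : ℝ → ℝ) (hf : ContinuousAt f (hahnOmega0 q ω))
    (hdiff : ∀ t ∈ I, HahnDiffAt q ω f t) :
    ∀ a ∈ I, ∀ b ∈ I,
      JNConvergesAt q ω (hahnDeriv q ω f) a ∧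
      JNConvergesAt q ω (hahnDeriv q ω f) b ∧
      jnIntegral q ω (hahnDeriv q ω f) a b = f b - f a := by
  intro a _ b _
  obtain ⟨ha1, ha2⟩ := jn_key q ω hq0 hq1 f hf a
  obtain ⟨hb1, hb2⟩ := jn_key q ω hq0 hq1 f hf b
  refine ⟨ha1, hb1, ?_⟩
  unfold jnIntegral
  rw [ha2, hb2]
  ring
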